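/- Suppose a Byzantine-generals-style broadcast primitive satisfies agreement (all honest clients output the same value) and validity (if the honest awake leader broadcasts v, all clients output v). Then the SMR protocol that runs sequential instances of this primitive, with instance leaders rotating over all n validators, satisfies: (safety) any two honest clients' logs at any times are prefix-comparable, and (liveness) any transaction received by all honest awake validators before an instance with an honest awake leader appears in every honest client's log after that instance. -/

import Mathlib

/-- Abstract composition: sequentially running a broadcast primitive with
agreement and validity yields an SMR protocol that is safe (all honest
clients' logs are prefix-comparable) and live (a transaction ready before an
instance with an honest awake leader appears in every client's log once that
instance has completed).  `out c i` is the block client `c` obtains from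
instance `i`, `m c r` the number of instances completed in `c`'s view at
time `r`, and the log is the sequence of obtained blocks. -/
theorem stmt_8 {Client Tx : Type}
    (out : Client → ℕ → List Tx)   -- block output by each instance, per client
    (m : Client → ℕ → ℕ)           -- instances completed by time r
    (honestLeader : ℕ → Prop)      -- instance i has an honest awake leader
    (ready : Tx → ℕ → Prop)        -- tx received by all honest awake validators before instance i
    (hagree : ∀ c c' i, out c i = out c' i)
    (hvalid : ∀ i tx c, honestLeader i → ready tx i → tx ∈ out c i) :
    -- safety: logs are prefix-comparable
    (∀ c r c' r',
        ((List.range (m c r)).map (out c)) <+: ((List.range (m c' r')).map (out c')) ∨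
        ((List.range (m c' r')).map (out c')) <+: ((List.range (m c r)).map (out c))) ∧
    -- liveness: after the honest-leader instance, tx is in every client's log
    (∀ i tx, honestLeader i → ready tx i →
        ∀ c r, i < m c r → ∃ B ∈ (List.range (m c r)).map (out c), tx ∈ B) := by
  have hfun : ∀ c c' : Client, out c = out c' := fun c c' => funext (hagree c c')
  constructor
  · intro c r c' r'
    rw [hfun c c']
    rcases le_total (m c r) (m c' r') with h | h
    · exact Or.inl (List.IsPrefix.map _
        (List.prefix_iff_eq_take.mpr (by rw [List.take_range]; simp [min_eq_left h])))
    · exact Or.inr (List.IsPrefix.map _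
        (List.prefix_iff_eq_take.mpr (by rw [List.take_range]; simp [min_eq_left h])))
  · intro i tx hl hr c r hi
    exact ⟨out c i, List.mem_map_of_mem (List.mem_range.mpr hi), hvalid i tx c hl hr⟩
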